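/- arXiv:2004.11099 — 3 statements merged into one kernel-verified Lean document; each statement's English description precedes it below -/
import Mathlib

section
/- A complex rank-1 matrix H of size M×N (with M,N ≥ 2) has Hankel structure (i.e., H_{k,ℓ} depends only on k+ℓ) if and only if H = c·z_M·z_N^T for some c ∈ ℂ\{0} and z ∈ ℂ, where z_N denotes the normalized vector (1, z, z², …, z^{N-1})^T / ‖(1, z, …, z^{N-1})‖₂, or H = c·e_M·e_N^T where e_N is the last standard basis vector. -/
open Matrix

/-- Normalized structured vector `(1, z, …, z^{N-1})ᵀ / ‖·‖₂`. -/
noncomputable def zvec (N : ℕ) (z : ℂ) : Fin N → ℂ :=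
  fun k => ((Real.sqrt (∑ j : Fin N, ‖z‖ ^ (2 * (j : ℕ))) : ℝ) : ℂ)⁻¹ * z ^ (k : ℕ)

/-- Last standard basis vector of `ℂ^N`. -/
def evec (N : ℕ) : Fin N → ℂ := fun k => if (k : ℕ) = N - 1 then 1 else 0

/-- A matrix is Hankel if its entries depend only on the sum of the indices. -/
def IsHankel {M N : ℕ} (H : Matrix (Fin M) (Fin N) ℂ) : Prop :=
  ∀ (k m : Fin M) (l n : Fin N), (k : ℕ) + (l : ℕ) = (m : ℕ) + (n : ℕ) → H k l = H m n

open Module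

lemma sqrt_sum_pos (N : ℕ) (hN : 0 < N) (z : ℂ) :
    0 < Real.sqrt (∑ j : Fin N, ‖z‖ ^ (2 * (j : ℕ))) := by
  apply Real.sqrt_pos.mpr
  have h2 : ‖z‖ ^ (2 * ((⟨0, hN⟩ : Fin N) : ℕ)) ≤ ∑ j : Fin N, ‖z‖ ^ (2 * (j : ℕ)) :=
    Finset.single_le_sum (f := fun j : Fin N => ‖z‖ ^ (2 * (j : ℕ)))
      (fun i _ => by positivity) (Finset.mem_univ _)
  simp only [Fin.val_mk, Nat.mul_zero, pow_zero] at h2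
  linarith

lemma rank_one_fact {M N : ℕ} (H : Matrix (Fin M) (Fin N) ℂ) (hrank : H.rank = 1) :
    ∃ u : Fin M → ℂ, ∃ v : Fin N → ℂ, ∀ k l, H k l = u k * v l := by
  have hfin : finrank ℂ (LinearMap.range H.mulVecLin) = 1 := hrank
  obtain ⟨⟨u, hu_mem⟩, hu0, hspan⟩ := finrank_eq_one_iff'.mp hfin
  have hcol : ∀ l : Fin N, ∃ c : ℂ, ∀ k, H k l = u k * c := by
    intro l
    have hmem : (fun k => H k l) ∈ LinearMap.range H.mulVecLin := by
      refine ⟨Pi.single l 1, ?_⟩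
      ext k
      simp [mulVecLin_apply, mulVec_single]
    obtain ⟨c, hc⟩ := hspan ⟨_, hmem⟩
    refine ⟨c, fun k => ?_⟩
    have := congrFun (congrArg Subtype.val hc) k
    simp only [Submodule.coe_smul, Pi.smul_apply, smul_eq_mul] at this
    rw [← this]; ring
  choose v hv using hcol
  exact ⟨u, v, fun k l => hv l k⟩

lemma descent_lem {M N : ℕ} (hM : 2 ≤ M) (hN : 2 ≤ N)
    (H : Matrix (Fin M) (Fin N) ℂ) (hH : IsHankel H)
    (u : Fin M → ℂ) (v : Fin N → ℂ) (huv : ∀ k l, H k l = u k * v l)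
    (k : Fin M) (l : Fin N) (hkl : H k l ≠ 0)
    (hlt : (k : ℕ) + (l : ℕ) < M + N - 2) (hge : 1 ≤ (k : ℕ) + (l : ℕ)) :
    ∃ (k' : Fin M) (l' : Fin N),
      (k' : ℕ) + (l' : ℕ) + 1 = (k : ℕ) + (l : ℕ) ∧ H k' l' ≠ 0 := by
  have hu : u k ≠ 0 := fun h => hkl (by rw [huv, h, zero_mul])
  have hv' : v l ≠ 0 := fun h => hkl (by rw [huv, h, mul_zero])
  by_cases hk1 : (k : ℕ) + 1 < M
  · by_cases hl1 : 1 ≤ (l : ℕ)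
    · have hst : H ⟨(k:ℕ)+1, hk1⟩ ⟨(l:ℕ)-1, by omega⟩ = H k l :=
        hH _ _ _ _ (by simp; omega)
      have hne : H ⟨(k:ℕ)+1, hk1⟩ ⟨(l:ℕ)-1, by omega⟩ ≠ 0 := by rw [hst]; exact hkl
      have hv2 : v ⟨(l:ℕ)-1, by omega⟩ ≠ 0 := fun h => hne (by rw [huv, h, mul_zero])
      refine ⟨k, ⟨(l:ℕ)-1, by omega⟩, by simp; omega, ?_⟩
      rw [huv]
      exact mul_ne_zero hu hv2
    · have hk0 : 1 ≤ (k : ℕ) := by omega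
      have hl0 : (l : ℕ) = 0 := by omega
      have h1N : 1 < N := by omega
      have hst : H ⟨(k:ℕ)-1, by omega⟩ ⟨1, h1N⟩ = H k l := hH _ _ _ _ (by simp; omega)
      have hne : H ⟨(k:ℕ)-1, by omega⟩ ⟨1, h1N⟩ ≠ 0 := by rw [hst]; exact hkl
      have hu2 : u ⟨(k:ℕ)-1, by omega⟩ ≠ 0 := fun h => hne (by rw [huv, h, zero_mul])
      have hvl : v ⟨0, by omega⟩ ≠ 0 := by
        have hlq : l = ⟨0, by omega⟩ := by apply Fin.ext; simpa using hl0
        rw [← hlq]; exact hv'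
      refine ⟨⟨(k:ℕ)-1, by omega⟩, ⟨0, by omega⟩, by simp; omega, ?_⟩
      rw [huv]
      exact mul_ne_zero hu2 hvl
  · have hkM : (k : ℕ) = M - 1 := by have := k.isLt; omega
    have hlN : (l : ℕ) + 1 < N := by omega
    have hk0 : 1 ≤ (k : ℕ) := by omega
    have hst : H ⟨(k:ℕ)-1, by omega⟩ ⟨(l:ℕ)+1, hlN⟩ = H k l := hH _ _ _ _ (by simp; omega)
    have hne : H ⟨(k:ℕ)-1, by omega⟩ ⟨(l:ℕ)+1, hlN⟩ ≠ 0 := by rw [hst]; exact hkl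
    have hu2 : u ⟨(k:ℕ)-1, by omega⟩ ≠ 0 := fun h => hne (by rw [huv, h, zero_mul])
    refine ⟨⟨(k:ℕ)-1, by omega⟩, l, by simp; omega, ?_⟩
    rw [huv]
    exact mul_ne_zero hu2 hv'

lemma zero_lem {M N : ℕ} (hM : 2 ≤ M) (hN : 2 ≤ N)
    (H : Matrix (Fin M) (Fin N) ℂ) (hH : IsHankel H)
    (u : Fin M → ℂ) (v : Fin N → ℂ) (huv : ∀ k l, H k l = u k * v l)
    (ha : H ⟨0, by omega⟩ ⟨0, by omega⟩ = 0) :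
    ∀ s : ℕ, s < M + N - 2 → ∀ (k : Fin M) (l : Fin N), (k : ℕ) + (l : ℕ) = s → H k l = 0 := by
  intro s
  induction s with
  | zero =>
    intro _ k l hsum
    have hk : k = ⟨0, by omega⟩ := by apply Fin.ext; simp; omega
    have hl : l = ⟨0, by omega⟩ := by apply Fin.ext; simp; omega
    rw [hk, hl]; exact ha
  | succ n ih =>
    intro hlt k l hsum
    by_contra hne
    obtain ⟨k', l', hsum', hne'⟩ := descent_lem hM hN H hH u v huv k l hne (by omega) (by omega)
    exact hne' (ih (by omega) k' l' (by omega))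

lemma geom_lem {M N : ℕ} (hM : 2 ≤ M) (hN : 2 ≤ N)
    (H : Matrix (Fin M) (Fin N) ℂ) (hH : IsHankel H)
    (minor : ∀ (k m : Fin M) (l n : Fin N), H k l * H m n = H k n * H m l)
    (ha : H ⟨0, by omega⟩ ⟨0, by omega⟩ ≠ 0) :
    ∀ (k : Fin M) (l : Fin N),
      H k l = H ⟨0, by omega⟩ ⟨0, by omega⟩ *
        (H ⟨1, by omega⟩ ⟨0, by omega⟩ / H ⟨0, by omega⟩ ⟨0, by omega⟩) ^ ((k : ℕ) + (l : ℕ)) := by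
  set I0 : Fin M := ⟨0, by omega⟩ with hI0
  set I1 : Fin M := ⟨1, by omega⟩ with hI1
  set J0 : Fin N := ⟨0, by omega⟩ with hJ0
  set J1 : Fin N := ⟨1, by omega⟩ with hJ1
  set a := H I0 J0 with haa
  set z := H I1 J0 / a with hzz
  have hz1 : H I1 J0 = a * z := by rw [hzz]; field_simp
  have hz2 : H I0 J1 = a * z := by
    rw [← hz1]; exact hH _ _ _ _ (by simp [hI0, hI1, hJ0, hJ1])
  have col0 : ∀ kk : ℕ, ∀ hk : kk < M, H ⟨kk, hk⟩ J0 = a * z ^ kk := by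
    intro kk
    induction kk with
    | zero => intro hk; rw [pow_zero, mul_one]
    | succ n ih =>
      intro hk
      have hn : n < M := by omega
      have h1 : H ⟨n+1, hk⟩ J0 = H ⟨n, hn⟩ J1 := hH _ _ _ _ (by simp [hJ0, hJ1])
      have h2 := minor ⟨n, hn⟩ I0 J1 J0
      have key : H ⟨n+1, hk⟩ J0 * a = a * z ^ (n+1) * a := by
        rw [h1]
        calc H ⟨n, hn⟩ J1 * a = H ⟨n, hn⟩ J0 * H I0 J1 := h2
        _ = (a * z ^ n) * (a * z) := by rw [ih hn, hz2]
        _ = a * z ^ (n+1) * a := by ring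
      exact mul_right_cancel₀ ha key
  have row0 : ∀ ll : ℕ, ∀ hl : ll < N, H I0 ⟨ll, hl⟩ = a * z ^ ll := by
    intro ll
    induction ll with
    | zero => intro hl; rw [pow_zero, mul_one]
    | succ n ih =>
      intro hl
      have hn : n < N := by omega
      have h1 : H I0 ⟨n+1, hl⟩ = H I1 ⟨n, hn⟩ := hH _ _ _ _ (by simp [hI0, hI1]; omega)
      have h2 := minor I1 I0 ⟨n, hn⟩ J0
      have key : H I0 ⟨n+1, hl⟩ * a = a * z ^ (n+1) * a := by
        rw [h1]
        calc H I1 ⟨n, hn⟩ * a = H I1 J0 * H I0 ⟨n, hn⟩ := h2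
        _ = (a * z) * (a * z ^ n) := by rw [ih hn, hz1]
        _ = a * z ^ (n+1) * a := by ring
      exact mul_right_cancel₀ ha key
  intro k l
  have h2 := minor k I0 l J0
  have key : H k l * a = a * z ^ ((k : ℕ) + (l : ℕ)) * a := by
    calc H k l * a = H k J0 * H I0 l := by rw [h2]
    _ = (a * z ^ (k : ℕ)) * (a * z ^ (l : ℕ)) := by
        rw [show H k J0 = a * z ^ (k:ℕ) from col0 k k.isLt,
            show H I0 l = a * z ^ (l:ℕ) from row0 l l.isLt]
    _ = a * z ^ ((k : ℕ) + (l : ℕ)) * a := by rw [pow_add]; ring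
  exact mul_right_cancel₀ ha key

theorem stmt0 (M N : ℕ) (hM : 2 ≤ M) (hN : 2 ≤ N)
    (H : Matrix (Fin M) (Fin N) ℂ) (hrank : H.rank = 1) :
    IsHankel H ↔
      ∃ c : ℂ, c ≠ 0 ∧
        ((∃ z : ℂ, H = c • vecMulVec (zvec M z) (zvec N z)) ∨
          H = c • vecMulVec (evec M) (evec N)) := by
  constructor
  · intro hH
    obtain ⟨u, v, huv⟩ := rank_one_fact H hrank
    have minor : ∀ (k m : Fin M) (l n : Fin N), H k l * H m n = H k n * H m l := by
      intro k m l n; simp only [huv]; ring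
    by_cases ha : H ⟨0, by omega⟩ ⟨0, by omega⟩ ≠ 0
    · set a := H (⟨0, by omega⟩ : Fin M) (⟨0, by omega⟩ : Fin N) with haa
      set z := H (⟨1, by omega⟩ : Fin M) (⟨0, by omega⟩ : Fin N) / a with hzz
      have hent := geom_lem hM hN H hH minor ha
      set sM : ℝ := Real.sqrt (∑ j : Fin M, ‖z‖ ^ (2 * (j : ℕ))) with hsM
      set sN : ℝ := Real.sqrt (∑ j : Fin N, ‖z‖ ^ (2 * (j : ℕ))) with hsN
      have hsM0 : (sM : ℂ) ≠ 0 := by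
        exact_mod_cast (sqrt_sum_pos M (by omega) z).ne'
      have hsN0 : (sN : ℂ) ≠ 0 := by
        exact_mod_cast (sqrt_sum_pos N (by omega) z).ne'
      refine ⟨a * sM * sN, by simp [ha, hsM0, hsN0, haa]; exact ha, Or.inl ⟨z, ?_⟩⟩
      ext k l
      rw [hent k l]
      simp only [Matrix.smul_apply, vecMulVec_apply, zvec, smul_eq_mul, ← hsM, ← hsN, ← hzz, ← haa]
      rw [pow_add]
      field_simp
    · push_neg at ha
      have hzero := zero_lem hM hN H hH u v huv ha
      set IM : Fin M := ⟨M - 1, by omega⟩ with hIM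
      set JN : Fin N := ⟨N - 1, by omega⟩ with hJN
      have hHne : H IM JN ≠ 0 := by
        intro hcorner
        have hzero' : H = 0 := by
          ext k l
          by_cases hc : (k : ℕ) + (l : ℕ) < M + N - 2
          · exact hzero _ hc k l rfl
          · have hk : (k : ℕ) = M - 1 := by have := k.isLt; have := l.isLt; omega
            have hl : (l : ℕ) = N - 1 := by have := k.isLt; have := l.isLt; omega
            have hk' : k = IM := by apply Fin.ext; simpa [hIM]
            have hl' : l = JN := by apply Fin.ext; simpa [hJN]
            rw [hk', hl']; exact hcorner
        rw [hzero'] at hrank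
        simp [Matrix.rank_zero] at hrank
      refine ⟨H IM JN, hHne, Or.inr ?_⟩
      ext k l
      simp only [Matrix.smul_apply, vecMulVec_apply, evec, smul_eq_mul]
      by_cases hc : (k : ℕ) = M - 1 ∧ (l : ℕ) = N - 1
      · have hk : k = IM := by apply Fin.ext; simpa [hIM] using hc.1
        have hl : l = JN := by apply Fin.ext; simpa [hJN] using hc.2
        rw [hk, hl]
        simp [hIM, hJN, hc.1, hc.2]
      · have hsum : (k : ℕ) + (l : ℕ) < M + N - 2 := by
          have := k.isLt; have := l.isLt
          rcases not_and_or.mp hc with h | h <;> omega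
        rw [hzero _ hsum k l rfl]
        rcases not_and_or.mp hc with h | h <;> simp [h]
  · rintro ⟨c, hc, ⟨z, rfl⟩ | rfl⟩
    · intro k m l n hsum
      simp only [Matrix.smul_apply, vecMulVec_apply, zvec, smul_eq_mul]
      have hp : z ^ (k : ℕ) * z ^ (l : ℕ) = z ^ (m : ℕ) * z ^ (n : ℕ) := by
        rw [← pow_add, ← pow_add, hsum]
      set r : ℂ := ((Real.sqrt (∑ j : Fin M, ‖z‖ ^ (2 * (j : ℕ))) : ℝ) : ℂ)⁻¹
      set r' : ℂ := ((Real.sqrt (∑ j : Fin N, ‖z‖ ^ (2 * (j : ℕ))) : ℝ) : ℂ)⁻¹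
      linear_combination (c * r * r') * hp
    · intro k m l n hsum
      simp only [Matrix.smul_apply, vecMulVec_apply, evec, smul_eq_mul]
      have hk := k.isLt; have hm := m.isLt; have hl := l.isLt; have hn := n.isLt
      by_cases h1 : (k : ℕ) = M - 1 ∧ (l : ℕ) = N - 1
      · have h2 : (m : ℕ) = M - 1 ∧ (n : ℕ) = N - 1 := by omega
        simp [h1.1, h1.2, h2.1, h2.2]
      · have h2 : ¬((m : ℕ) = M - 1 ∧ (n : ℕ) = N - 1) := by omega
        rcases not_and_or.mp h1 with h | h <;> rcases not_and_or.mp h2 with h' | h' <;>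
          simp [h, h']
end

section
/- Let N ≥ 2, c > 0, D = diag(d₀, …, d_{N-1}) with d₀ < 0 and d_j > 0 for j = 1, …, N-1, and b ∈ ℝ^N. Then the matrix B = D + c·b·b^T is positive semidefinite if and only if ∑_{j=0}^{N-1} b_j²/(-d_j) ≥ 1/c. Moreover, if the inequality is strict, then B is positive definite. -/
open Matrix

lemma wCS {ι : Type*} (s : Finset ι) (w a y : ι → ℝ) (hw : ∀ i ∈ s, 0 < w i) :
    (∑ i ∈ s, a i * y i) ^ 2 ≤ (∑ i ∈ s, a i ^ 2 / w i) * ∑ i ∈ s, w i * y i ^ 2 := by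
  have h := Finset.sum_mul_sq_le_sq_mul_sq s (fun i => a i / Real.sqrt (w i))
    (fun i => Real.sqrt (w i) * y i)
  have e1 : ∑ i ∈ s, (a i / Real.sqrt (w i)) * (Real.sqrt (w i) * y i) = ∑ i ∈ s, a i * y i := by
    refine Finset.sum_congr rfl fun i hi => ?_
    have hs : Real.sqrt (w i) ≠ 0 := ne_of_gt (Real.sqrt_pos.2 (hw i hi))
    field_simp
  have e2 : ∑ i ∈ s, (a i / Real.sqrt (w i)) ^ 2 = ∑ i ∈ s, a i ^ 2 / w i := by
    refine Finset.sum_congr rfl fun i hi => ?_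
    rw [div_pow, Real.sq_sqrt (hw i hi).le]
  have e3 : ∑ i ∈ s, (Real.sqrt (w i) * y i) ^ 2 = ∑ i ∈ s, w i * y i ^ 2 := by
    refine Finset.sum_congr rfl fun i hi => ?_
    rw [mul_pow, Real.sq_sqrt (hw i hi).le]
  rw [e1, e2, e3] at h
  exact h

lemma qf_lemma (N : ℕ) (c : ℝ) (d b x : Fin N → ℝ) :
    dotProduct (star x) ((Matrix.diagonal d + c • vecMulVec b b) *ᵥ x)
      = ∑ j, d j * x j ^ 2 + c * (∑ j, b j * x j) ^ 2 := by
  have h1 : star x = x := by simp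
  rw [h1, add_mulVec, dotProduct_add]
  congr 1
  · simp [dotProduct, mulVec_diagonal, pow_two]
    exact Finset.sum_congr rfl fun i _ => by ring
  · rw [smul_mulVec, dotProduct_smul]
    have : dotProduct x (vecMulVec b b *ᵥ x) = (∑ j, b j * x j) * (∑ j, b j * x j) := by
      simp [dotProduct, mulVec, vecMulVec_apply, Finset.mul_sum, Finset.sum_mul]
      rw [Finset.sum_comm]
      exact Finset.sum_congr rfl fun i _ => Finset.sum_congr rfl fun j _ => by ring
    rw [this, smul_eq_mul, pow_two]

lemma herm_lemma (N : ℕ) (c : ℝ) (d b : Fin N → ℝ) :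
    (Matrix.diagonal d + c • vecMulVec b b).IsHermitian := by
  have h1 : (Matrix.diagonal d).IsHermitian := isHermitian_diagonal d
  have h2 : (c • vecMulVec b b : Matrix (Fin N) (Fin N) ℝ).IsHermitian := by
    show _ = _
    ext i j
    simp only [Matrix.conjTranspose_apply, Matrix.smul_apply, vecMulVec_apply, star_trivial,
      smul_eq_mul]
    ring
  exact h1.add h2

lemma claim_lemma (c K P v s : ℝ) (hc : 0 < c) (hK0 : 0 ≤ K) (hP0 : 0 ≤ P)
    (hCS : s ^ 2 ≤ K * P) : c * (v - s) ^ 2 ≤ (1 + c * K) * (c * v ^ 2 + P) := by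
  rcases eq_or_lt_of_le hK0 with hK | hK
  · have hs : s = 0 := by nlinarith [sq_nonneg s]
    subst hs
    nlinarith [hP0, mul_nonneg hc.le (sq_nonneg v), mul_nonneg (mul_nonneg hK0 hc.le) (sq_nonneg v),
      mul_nonneg (mul_nonneg hK0 hc.le) (mul_nonneg hc.le (sq_nonneg v)), mul_nonneg hK0 hP0]
  · nlinarith [sq_nonneg (c * K * v + s), sub_nonneg.2 hCS, hK,
      mul_nonneg (mul_nonneg hc.le hK0) (sub_nonneg.2 hCS), mul_pos hc hK]

/-- Positive semidefiniteness of `D + c·b·bᵀ` where `D` has exactly one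
negative diagonal entry `d₀ < 0` and all other entries positive. -/
theorem stmt8 (N : ℕ) (hN : 2 ≤ N) (c : ℝ) (hc : 0 < c)
    (d : Fin N → ℝ) (b : Fin N → ℝ)
    (hd0 : d ⟨0, by omega⟩ < 0)
    (hdj : ∀ j : Fin N, j ≠ ⟨0, by omega⟩ → 0 < d j) :
    ((Matrix.diagonal d + c • vecMulVec b b).PosSemidef ↔
      1 / c ≤ ∑ j : Fin N, b j ^ 2 / (-(d j))) ∧
    (1 / c < ∑ j : Fin N, b j ^ 2 / (-(d j)) →
      (Matrix.diagonal d + c • vecMulVec b b).PosDef) := by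
  have hN0 : 0 < N := by omega
  set i0 : Fin N := ⟨0, hN0⟩ with hi0def
  have hd0' : d i0 < 0 := hd0
  have hdj' : ∀ j : Fin N, j ≠ i0 → 0 < d j := hdj
  have hnd0 : 0 < -(d i0) := neg_pos.2 hd0'
  set E : Finset (Fin N) := Finset.univ.erase i0 with hE
  have hmem : ∀ j ∈ E, j ≠ i0 := fun j hj => (Finset.mem_erase.1 hj).1
  have hdE : ∀ j ∈ E, 0 < d j := fun j hj => hdj' j (hmem j hj)
  set K : ℝ := ∑ j ∈ E, b j ^ 2 / d j with hKdef
  have hK0 : 0 ≤ K := Finset.sum_nonneg fun j hj => div_nonneg (sq_nonneg _) (hdE j hj).le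
  have h1cK : (0:ℝ) < 1 + c * K := by positivity
  have hsplit : ∀ f : Fin N → ℝ, ∑ j, f j = f i0 + ∑ j ∈ E, f j := fun f =>
    (Finset.add_sum_erase Finset.univ f (Finset.mem_univ i0)).symm
  have hT : ∑ j, b j ^ 2 / (-(d j)) = b i0 ^ 2 / (-(d i0)) - K := by
    rw [hsplit]
    have he : ∑ j ∈ E, b j ^ 2 / (-(d j)) = -K := by
      rw [hKdef, ← Finset.sum_neg_distrib]
      exact Finset.sum_congr rfl fun j hj => by rw [div_neg]
    rw [he]; ring
  -- translate conditions into polynomial form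
  have hcc : c * (1/c) = 1 := by field_simp
  have hiff : 1/c ≤ ∑ j, b j ^ 2 / (-(d j)) ↔ (1 + c*K) * (-(d i0)) ≤ c * b i0 ^ 2 := by
    rw [hT, le_sub_iff_add_le, le_div_iff₀ hnd0]
    constructor <;> intro h
    · have := mul_le_mul_of_nonneg_left h hc.le
      calc (1 + c*K) * (-(d i0)) = c * ((1/c + K) * (-(d i0))) := by
            linear_combination (d i0) * hcc
        _ ≤ c * b i0 ^ 2 := this
    · have := mul_le_mul_of_nonneg_left h (le_of_lt (show (0:ℝ) < 1/c by positivity))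
      calc (1/c + K) * (-(d i0)) = (1/c) * ((1 + c*K) * (-(d i0))) := by
            linear_combination (K * d i0) * hcc
        _ ≤ (1/c) * (c * b i0 ^ 2) := this
        _ = b i0 ^ 2 := by linear_combination (b i0 ^ 2) * hcc
  have hifflt : 1/c < ∑ j, b j ^ 2 / (-(d j)) ↔ (1 + c*K) * (-(d i0)) < c * b i0 ^ 2 := by
    rw [hT, lt_sub_iff_add_lt, lt_div_iff₀ hnd0]
    constructor <;> intro h
    · have := mul_lt_mul_of_pos_left h hc
      calc (1 + c*K) * (-(d i0)) = c * ((1/c + K) * (-(d i0))) := by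
            linear_combination (d i0) * hcc
        _ < c * b i0 ^ 2 := this
    · have := mul_lt_mul_of_pos_left h (show (0:ℝ) < 1/c by positivity)
      calc (1/c + K) * (-(d i0)) = (1/c) * ((1 + c*K) * (-(d i0))) := by
            linear_combination (K * d i0) * hcc
        _ < (1/c) * (c * b i0 ^ 2) := this
        _ = b i0 ^ 2 := by linear_combination (b i0 ^ 2) * hcc
  -- pointwise quadratic form analysis
  have hpoint : ∀ x : Fin N → ℝ,
      ∑ j, d j * x j ^ 2 + c * (∑ j, b j * x j) ^ 2
        = d i0 * x i0 ^ 2 + (∑ j ∈ E, d j * x j ^ 2)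
          + c * (b i0 * x i0 + ∑ j ∈ E, b j * x j) ^ 2 := by
    intro x
    rw [hsplit (fun j => d j * x j ^ 2), hsplit (fun j => b j * x j)]
  have hCSx : ∀ x : Fin N → ℝ,
      (∑ j ∈ E, b j * x j) ^ 2 ≤ K * (∑ j ∈ E, d j * x j ^ 2) := by
    intro x
    have := wCS E d b x hdE
    simpa [hKdef] using this
  have hPx : ∀ x : Fin N → ℝ, 0 ≤ ∑ j ∈ E, d j * x j ^ 2 := fun x =>
    Finset.sum_nonneg fun j hj => mul_nonneg (hdE j hj).le (sq_nonneg _)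
  constructor
  · constructor
    · -- PosSemidef → inequality
      intro hPSD
      rw [hiff]
      -- test vector
      set C : ℝ := -(c * b i0) / (1 + c*K) with hCdef
      set x : Fin N → ℝ := fun j => if j = i0 then 1 else C * (b j / d j) with hxdef
      have hx0 : x i0 = 1 := if_pos rfl
      have hsx : ∑ j ∈ E, b j * x j = C * K := by
        rw [hKdef, Finset.mul_sum]
        refine Finset.sum_congr rfl fun j hj => ?_
        have h1 := hmem j hj
        have h2 := (hdE j hj).ne'
        rw [hxdef]
        simp only [if_neg h1]
        field_simp
      have hPxval : ∑ j ∈ E, d j * x j ^ 2 = C ^ 2 * K := by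
        rw [hKdef, Finset.mul_sum]
        refine Finset.sum_congr rfl fun j hj => ?_
        have h1 := hmem j hj
        have h2 := (hdE j hj).ne'
        rw [hxdef]
        simp only [if_neg h1]
        field_simp
      have hq0 := hPSD.dotProduct_mulVec_nonneg x
      rw [qf_lemma, hpoint x, hx0, hsx, hPxval] at hq0
      have hqval : d i0 * 1 ^ 2 + C ^ 2 * K + c * (b i0 * 1 + C * K) ^ 2
          = d i0 + c * b i0 ^ 2 / (1 + c*K) := by
        rw [hCdef]
        field_simp
        ring
      rw [hqval] at hq0
      have h2 : -(d i0) ≤ c * b i0 ^ 2 / (1 + c*K) := by linarith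
      have h3 := (le_div_iff₀ h1cK).1 h2
      linarith [h3]
    · -- inequality → PosSemidef
      intro hineq
      rw [hiff] at hineq
      refine PosSemidef.of_dotProduct_mulVec_nonneg (herm_lemma N c d b) fun x => ?_
      rw [qf_lemma, hpoint x]
      set t := x i0
      set s := ∑ j ∈ E, b j * x j
      set P := ∑ j ∈ E, d j * x j ^ 2
      have hCS := hCSx x
      have hP0 := hPx x
      have hclaim := claim_lemma c K P (b i0 * t + s) s hc hK0 hP0 hCS
      have hsq : (b i0 * t + s - s) ^ 2 = b i0 ^ 2 * t ^ 2 := by ring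
      rw [hsq] at hclaim
      nlinarith [mul_le_mul_of_nonneg_right hineq (sq_nonneg t), hclaim, h1cK,
        sq_nonneg (b i0 * t + s)]
  · -- strict
    intro hlt
    rw [hifflt] at hlt
    refine PosDef.of_dotProduct_mulVec_pos (herm_lemma N c d b) fun x hx => ?_
    rw [qf_lemma, hpoint x]
    set t := x i0 with htdef
    set s := ∑ j ∈ E, b j * x j
    set P := ∑ j ∈ E, d j * x j ^ 2
    have hCS := hCSx x
    have hP0 := hPx x
    rcases eq_or_ne t 0 with ht | ht
    · -- x i0 = 0, some other coordinate nonzero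
      obtain ⟨j, hj⟩ : ∃ j, x j ≠ 0 := Function.ne_iff.1 hx
      have hji0 : j ≠ i0 := by
        intro h; rw [h, ← htdef, ht] at hj; exact hj rfl
      have hjE : j ∈ E := Finset.mem_erase.2 ⟨hji0, Finset.mem_univ j⟩
      have hPpos : 0 < P := Finset.sum_pos'
        (fun k hk => mul_nonneg (hdE k hk).le (sq_nonneg _))
        ⟨j, hjE, mul_pos (hdE j hjE) (by positivity)⟩
      rw [ht]
      nlinarith [mul_nonneg hc.le (sq_nonneg (b i0 * 0 + s)), hPpos]
    · have hclaim := claim_lemma c K P (b i0 * t + s) s hc hK0 hP0 hCS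
      have hsq : (b i0 * t + s - s) ^ 2 = b i0 ^ 2 * t ^ 2 := by ring
      rw [hsq] at hclaim
      have ht2 : 0 < t ^ 2 := by positivity
      nlinarith [mul_lt_mul_of_pos_right hlt ht2, hclaim, h1cK]
end

section
/- Let A ∈ ℝ^{N×N} be symmetric with eigenvalues ordered by modulus |λ₀| ≥ |λ₁| ≥ … ≥ |λ_{N-1}|, λ₀ = ‖A‖₂ > |λ₁|, and rank(A) > 1. Then the optimal rank-1 Hankel approximation error λ̃ := min over rank-1 Hankel matrices H₁ of ‖A - H₁‖₂ satisfies |λ₁| ≤ λ̃ < λ₀. -/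
open Matrix

/-- Real normalized structured vector `(1, z, …, z^{N-1})ᵀ / ‖·‖₂`. -/
noncomputable def rzvec (N : ℕ) (z : ℝ) : Fin N → ℝ :=
  fun k => (Real.sqrt (∑ j : Fin N, z ^ (2 * (j : ℕ))))⁻¹ * z ^ (k : ℕ)

/-- Last standard basis vector of `ℝ^N`. -/
def revec (N : ℕ) : Fin N → ℝ := fun k => if (k : ℕ) = N - 1 then 1 else 0

noncomputable def rvnorm {ι : Type*} [Fintype ι] (x : ι → ℝ) : ℝ :=
  Real.sqrt (∑ i, x i ^ 2)

/-- Spectral norm of a real matrix. -/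
noncomputable def rspecNorm {M N : ℕ} (A : Matrix (Fin M) (Fin N) ℝ) : ℝ :=
  sSup {r : ℝ | ∃ x : Fin N → ℝ, rvnorm x = 1 ∧ r = rvnorm (A.mulVec x)}

open Finset

set_option maxHeartbeats 1000000

lemma rvnorm_nonneg {ι : Type*} [Fintype ι] (x : ι → ℝ) : 0 ≤ rvnorm x :=
  Real.sqrt_nonneg _

lemma rvnorm_sq {ι : Type*} [Fintype ι] (x : ι → ℝ) : rvnorm x ^ 2 = ∑ i, x i ^ 2 :=
  Real.sq_sqrt (Finset.sum_nonneg fun i _ => sq_nonneg _)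

lemma rvnorm_eq_one {ι : Type*} [Fintype ι] {x : ι → ℝ} (h : rvnorm x = 1) :
    ∑ i, x i ^ 2 = 1 := Real.sqrt_eq_one.mp h

lemma rvnorm_eq_sqrt_dot {n : ℕ} (x : Fin n → ℝ) : rvnorm x = Real.sqrt (x ⬝ᵥ x) := by
  simp [rvnorm, dotProduct, sq]

/-- unit vector e0 -/
lemma exists_unit_vec (n : ℕ) (hn : 0 < n) : ∃ x : Fin n → ℝ, rvnorm x = 1 := by
  refine ⟨fun k => if k = ⟨0, hn⟩ then 1 else 0, ?_⟩
  simp [rvnorm, Finset.sum_ite_eq']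

lemma frob_bound {m n : ℕ} (B : Matrix (Fin m) (Fin n) ℝ) {x : Fin n → ℝ}
    (hx : rvnorm x = 1) :
    rvnorm (B.mulVec x) ≤ Real.sqrt (∑ i, ∑ j, B i j ^ 2) := by
  unfold rvnorm
  apply Real.sqrt_le_sqrt
  apply Finset.sum_le_sum
  intro i _
  calc (B.mulVec x i) ^ 2 = (∑ j, B i j * x j) ^ 2 := by rfl
    _ ≤ (∑ j, B i j ^ 2) * ∑ j, x j ^ 2 := Finset.sum_mul_sq_le_sq_mul_sq _ _ _
    _ = ∑ j, B i j ^ 2 := by rw [rvnorm_eq_one hx, mul_one]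

lemma specSet_bddAbove {m n : ℕ} (B : Matrix (Fin m) (Fin n) ℝ) :
    BddAbove {r : ℝ | ∃ x : Fin n → ℝ, rvnorm x = 1 ∧ r = rvnorm (B.mulVec x)} := by
  refine ⟨Real.sqrt (∑ i, ∑ j, B i j ^ 2), ?_⟩
  rintro r ⟨x, hx, rfl⟩
  exact frob_bound B hx

lemma le_rspecNorm {m n : ℕ} (B : Matrix (Fin m) (Fin n) ℝ) (x : Fin n → ℝ)
    (hx : rvnorm x = 1) : rvnorm (B.mulVec x) ≤ rspecNorm B :=
  le_csSup (specSet_bddAbove B) ⟨x, hx, rfl⟩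

lemma rspecNorm_le {m n : ℕ} (hn : 0 < n) (B : Matrix (Fin m) (Fin n) ℝ) (R : ℝ)
    (h : ∀ x : Fin n → ℝ, rvnorm x = 1 → rvnorm (B.mulVec x) ≤ R) : rspecNorm B ≤ R := by
  obtain ⟨x0, hx0⟩ := exists_unit_vec n hn
  refine csSup_le ⟨_, ⟨x0, hx0, rfl⟩⟩ ?_
  rintro r ⟨x, hx, rfl⟩
  exact h x hx

lemma rspecNorm_nonneg {m n : ℕ} (hn : 0 < n) (B : Matrix (Fin m) (Fin n) ℝ) :
    0 ≤ rspecNorm B := by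
  obtain ⟨x0, hx0⟩ := exists_unit_vec n hn
  exact le_trans (rvnorm_nonneg _) (le_rspecNorm B x0 hx0)

lemma rows_complete {N : ℕ} {v : Fin N → Fin N → ℝ}
    (horth : ∀ i j, v i ⬝ᵥ v j = if i = j then (1 : ℝ) else 0) :
    ∀ a b, ∑ i, v i a * v i b = if a = b then (1 : ℝ) else 0 := by
  intro a b
  set V : Matrix (Fin N) (Fin N) ℝ := Matrix.of v with hV
  have h1 : V * Vᵀ = 1 := by
    ext i j
    simpa [hV, Matrix.mul_apply, Matrix.one_apply, dotProduct] using horth i j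
  have h2 : Vᵀ * V = 1 := mul_eq_one_comm.mp h1
  have := congrFun (congrFun h2 a) b
  simpa [hV, Matrix.mul_apply, Matrix.one_apply] using this

lemma parseval {N : ℕ} {v : Fin N → Fin N → ℝ}
    (horth : ∀ i j, v i ⬝ᵥ v j = if i = j then (1 : ℝ) else 0)
    (x y : Fin N → ℝ) :
    ∑ i, (v i ⬝ᵥ x) * (v i ⬝ᵥ y) = x ⬝ᵥ y := by
  have hc := rows_complete horth
  calc ∑ i, (v i ⬝ᵥ x) * (v i ⬝ᵥ y)
      = ∑ i, ∑ p, ∑ q, (x p * y q) * (v i p * v i q) := by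
        refine Finset.sum_congr rfl fun i _ => ?_
        rw [dotProduct, dotProduct, Finset.sum_mul_sum]
        exact Finset.sum_congr rfl fun p _ => Finset.sum_congr rfl fun q _ => by ring
    _ = ∑ p, ∑ q, (x p * y q) * ∑ i, v i p * v i q := by
        rw [Finset.sum_comm]
        refine Finset.sum_congr rfl fun p _ => ?_
        rw [Finset.sum_comm]
        exact Finset.sum_congr rfl fun q _ => by rw [Finset.mul_sum]
    _ = ∑ p, x p * y p := by
        refine Finset.sum_congr rfl fun p _ => ?_
        rw [Finset.sum_congr rfl fun q (_ : q ∈ Finset.univ) => by rw [hc p q]]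
        simp [mul_ite]
    _ = x ⬝ᵥ y := rfl

lemma exists_eval_ne {N : ℕ} (c : Fin N → ℝ) (k0 : Fin N) (hc : c k0 ≠ 0) :
    ∃ z : ℝ, ∑ k : Fin N, c k * z ^ (k : ℕ) ≠ 0 := by
  by_contra h
  push_neg at h
  set p : Polynomial ℝ := ∑ k : Fin N, Polynomial.monomial (k : ℕ) (c k) with hp
  have heval : ∀ z : ℝ, p.eval z = 0 := by
    intro z
    rw [hp, Polynomial.eval_finset_sum]
    simpa [Polynomial.eval_monomial] using h z
  have hp0 : p = 0 := Polynomial.funext (q := 0) (by simpa using heval)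
  have : p.coeff (k0 : ℕ) = c k0 := by
    rw [hp, Polynomial.finset_sum_coeff]
    rw [Finset.sum_eq_single k0]
    · simp [Polynomial.coeff_monomial]
    · intro j _ hj
      rw [Polynomial.coeff_monomial]
      simp [Fin.val_eq_val, hj]
    · simp
  rw [hp0] at this
  simp at this
  exact hc this.symm


lemma zsum_pos {N : ℕ} (hN : 0 < N) (z : ℝ) : 0 < ∑ j : Fin N, z ^ (2 * (j : ℕ)) := by
  have h1 : ∀ j : Fin N, 0 ≤ z ^ (2 * (j : ℕ)) := by
    intro j; rw [pow_mul]; positivity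
  have h0 : (⟨0, hN⟩ : Fin N) ∈ Finset.univ := Finset.mem_univ _
  calc (0:ℝ) < z ^ (2 * ((⟨0, hN⟩ : Fin N) : ℕ)) := by norm_num
    _ ≤ _ := Finset.single_le_sum (fun j _ => h1 j) h0

lemma rzvec_sq_sum {N : ℕ} (hN : 0 < N) (z : ℝ) :
    ∑ k, (rzvec N z k) ^ 2 = 1 := by
  have hS := zsum_pos hN z
  set S := ∑ j : Fin N, z ^ (2 * (j : ℕ)) with hSdef
  have : ∑ k, (rzvec N z k) ^ 2 = (Real.sqrt S)⁻¹ ^ 2 * S := by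
    rw [Finset.mul_sum]
    refine Finset.sum_congr rfl fun k _ => ?_
    rw [rzvec, mul_pow, pow_mul, pow_right_comm]
  rw [this, ← Real.sqrt_inv, Real.sq_sqrt (by positivity), inv_mul_cancel₀ (ne_of_gt hS)]

lemma rzvec_dot {N : ℕ} (z : ℝ) (y : Fin N → ℝ) :
    rzvec N z ⬝ᵥ y = (Real.sqrt (∑ j : Fin N, z ^ (2 * (j : ℕ))))⁻¹
      * ∑ k : Fin N, y k * z ^ (k : ℕ) := by
  rw [dotProduct, Finset.mul_sum]
  exact Finset.sum_congr rfl fun k _ => by rw [rzvec]; ring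

lemma pert_mulVec {N : ℕ} (A : Matrix (Fin N) (Fin N) ℝ) (c : ℝ) (u x : Fin N → ℝ) :
    (A - c • vecMulVec u u).mulVec x = A.mulVec x - (c * (u ⬝ᵥ x)) • u := by
  rw [Matrix.sub_mulVec]
  congr 1
  funext i
  simp only [Matrix.mulVec, Matrix.smul_apply, Matrix.vecMulVec_apply, dotProduct,
    Pi.smul_apply, smul_eq_mul]
  rw [Finset.mul_sum]
  rw [show (∑ j, c * (u j * x j)) * u i = ∑ j, c • (u i * u j) * x j from ?_]
  · rfl
  · rw [Finset.sum_mul]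
    exact Finset.sum_congr rfl fun j _ => by simp; ring

lemma coeff_mulVec {N : ℕ} {A : Matrix (Fin N) (Fin N) ℝ} (hsymm : A.IsSymm)
    {lam : Fin N → ℝ} {v : Fin N → Fin N → ℝ}
    (heig : ∀ i, A.mulVec (v i) = lam i • v i) (i : Fin N) (x : Fin N → ℝ) :
    v i ⬝ᵥ A.mulVec x = lam i * (v i ⬝ᵥ x) := by
  rw [Matrix.dotProduct_mulVec, ← Matrix.mulVec_transpose, hsymm.eq, heig i,
    smul_dotProduct]
  rfl

lemma scalar_key (l0 mu e tau bb m T C : ℝ)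
    (hl0 : 0 < l0) (hmu : 0 ≤ mu) (hml : mu < l0) (he : 0 < e)
    (htau : 0 ≤ tau) (htau2 : tau ^ 2 = T) (hTpos : 0 < T)
    (hbb : 0 ≤ bb) (hm0 : 0 ≤ m) (hm1 : m ≤ 1)
    (hC : C = ((l0 ^ 2 - mu ^ 2) + 2 * (l0 + mu) ^ 2 * T) / (l0 ^ 2 - mu ^ 2))
    (he1 : e * (4 * mu + 4 * l0 * T + 1) ≤ l0 ^ 2 - mu ^ 2)
    (he2 : e * C ≤ l0 * T) :
    l0 ^ 2 * (1 - bb ^ 2) + mu ^ 2 * bb ^ 2 - 2 * e * l0 * T * (1 - bb ^ 2)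
      + 2 * e * (l0 + mu) * tau * (m * bb) + 2 * e * mu * bb ^ 2 + e ^ 2
      ≤ l0 ^ 2 - e * l0 * T := by
  subst htau2
  have hG : 0 < l0 ^ 2 - mu ^ 2 := by nlinarith
  have hCG : C * (l0 ^ 2 - mu ^ 2) = (l0 ^ 2 - mu ^ 2) + 2 * (l0 + mu) ^ 2 * tau ^ 2 := by
    rw [hC]; field_simp
  have h1 : 2 * e * (l0 + mu) * tau * (m * bb) ≤ 2 * e * (l0 + mu) * tau * bb := by
    have hmb : m * bb ≤ bb := by nlinarith
    have h0 : 0 ≤ 2 * e * (l0 + mu) * tau := by positivity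
    exact mul_le_mul_of_nonneg_left hmb h0
  have h1G := mul_le_mul_of_nonneg_left h1 hG.le
  have h2 : (l0 ^ 2 - mu ^ 2) * (2 * e * (l0 + mu) * tau * bb)
      ≤ ((l0 ^ 2 - mu ^ 2) ^ 2 / 2) * bb ^ 2 + 2 * e ^ 2 * (l0 + mu) ^ 2 * tau ^ 2 := by
    nlinarith [sq_nonneg ((l0 ^ 2 - mu ^ 2) * bb - 2 * e * (l0 + mu) * tau)]
  have h31 : 2 * e * l0 * tau ^ 2 + 2 * e * mu ≤ (l0 ^ 2 - mu ^ 2) / 2 := by nlinarith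
  have h3 : (l0 ^ 2 - mu ^ 2) * ((2 * e * l0 * tau ^ 2 + 2 * e * mu) * bb ^ 2)
      ≤ ((l0 ^ 2 - mu ^ 2) ^ 2 / 2) * bb ^ 2 := by
    have := mul_le_mul_of_nonneg_left h31
      (by positivity : (0:ℝ) ≤ (l0 ^ 2 - mu ^ 2) * bb ^ 2)
    linarith [this]
  have hCG2 : e ^ 2 * (C * (l0 ^ 2 - mu ^ 2))
      = e ^ 2 * ((l0 ^ 2 - mu ^ 2) + 2 * (l0 + mu) ^ 2 * tau ^ 2) := by rw [hCG]
  have h4 : (l0 ^ 2 - mu ^ 2) * e ^ 2 + 2 * e ^ 2 * (l0 + mu) ^ 2 * tau ^ 2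
      ≤ (l0 ^ 2 - mu ^ 2) * (e * (l0 * tau ^ 2)) := by
    have h40 := mul_le_mul_of_nonneg_left he2 (by positivity : (0:ℝ) ≤ e * (l0 ^ 2 - mu ^ 2))
    linarith [h40, hCG2]
  have hET : 0 ≤ (l0 ^ 2 - mu ^ 2) * (e * l0 * tau ^ 2) := by positivity
  have hfin : (l0 ^ 2 - mu ^ 2) *
      (l0 ^ 2 * (1 - bb ^ 2) + mu ^ 2 * bb ^ 2 - 2 * e * l0 * tau ^ 2 * (1 - bb ^ 2)
        + 2 * e * (l0 + mu) * tau * (m * bb) + 2 * e * mu * bb ^ 2 + e ^ 2)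
      ≤ (l0 ^ 2 - mu ^ 2) * (l0 ^ 2 - e * l0 * tau ^ 2) := by
    linarith [h1G, h2, h3, h4, hET]
  exact le_of_mul_le_mul_left hfin hG

lemma abs_le_of_sq_le' {x b : ℝ} (hb : 0 ≤ b) (h : x ^ 2 ≤ b ^ 2) : |x| ≤ b := by
  nlinarith [abs_nonneg x, sq_abs x]

lemma prod_bound {x y X Y : ℝ} (hx : |x| ≤ X) (hy : |y| ≤ Y) : -(x * y) ≤ X * Y := by
  calc -(x * y) ≤ |x * y| := neg_le_abs _
    _ = |x| * |y| := abs_mul x y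
    _ ≤ X * Y := mul_le_mul hx hy (abs_nonneg _) ((abs_nonneg x).trans hx)

lemma dot_expand {n : ℕ} (p w : Fin n → ℝ) (c : ℝ) :
    ∑ i, ((p - c • w) i) ^ 2 = p ⬝ᵥ p - 2 * c * (w ⬝ᵥ p) + c ^ 2 * (w ⬝ᵥ w) := by
  simp only [dotProduct, Pi.sub_apply, Pi.smul_apply, smul_eq_mul]
  rw [show (∑ i, (p i - c * w i) ^ 2)
      = ∑ i, (p i * p i - 2 * c * (w i * p i) + c ^ 2 * (w i * w i)) from
    Finset.sum_congr rfl fun i _ => by ring]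
  rw [Finset.sum_add_distrib, Finset.sum_sub_distrib, ← Finset.mul_sum, ← Finset.mul_sum]

lemma sum_sq_eq_dot {n : ℕ} (x : Fin n → ℝ) : ∑ i, x i ^ 2 = x ⬝ᵥ x := by
  simp [dotProduct, sq]

lemma key_upper {N : ℕ} (hN : 2 ≤ N) (A : Matrix (Fin N) (Fin N) ℝ) (hsymm : A.IsSymm)
    (lam : Fin N → ℝ) (v : Fin N → Fin N → ℝ)
    (heig : ∀ i, A.mulVec (v i) = lam i • v i)
    (horth : ∀ i j, v i ⬝ᵥ v j = if i = j then (1 : ℝ) else 0)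
    (hord : ∀ i j : Fin N, i ≤ j → |lam j| ≤ |lam i|)
    (hgap : |lam ⟨1, by omega⟩| < lam ⟨0, by omega⟩)
    (w : Fin N → ℝ) (hw : ∑ i, w i ^ 2 = 1)
    (ht : w ⬝ᵥ v ⟨0, by omega⟩ ≠ 0) :
    ∃ ε : ℝ, rspecNorm (A - ε • vecMulVec w w) < lam ⟨0, by omega⟩ := by
  set i0 : Fin N := ⟨0, by omega⟩ with hi0
  set i1 : Fin N := ⟨1, by omega⟩ with hi1
  set l0 : ℝ := lam i0 with hl0def
  set mu : ℝ := |lam i1| with hmudef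
  set t : ℝ := w ⬝ᵥ v i0 with htdef
  have hl0pos : 0 < l0 := lt_of_le_of_lt (abs_nonneg _) hgap
  have hmu : 0 ≤ mu := abs_nonneg _
  have hTpos : 0 < t ^ 2 := lt_of_le_of_ne (sq_nonneg t) (Ne.symm (pow_ne_zero 2 ht))
  have hv0sq : ∑ j, (v i0 j) ^ 2 = 1 := by
    rw [sum_sq_eq_dot, horth]; simp
  have hT1 : t ^ 2 ≤ 1 := by
    have hcs := Finset.sum_mul_sq_le_sq_mul_sq Finset.univ w (v i0)
    rw [hw, hv0sq] at hcs
    simpa [htdef, dotProduct] using hcs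
  have hG : 0 < l0 ^ 2 - mu ^ 2 := by
    have := pow_lt_pow_left₀ hgap hmu (two_ne_zero)
    linarith only [this]
  set C : ℝ := ((l0 ^ 2 - mu ^ 2) + 2 * (l0 + mu) ^ 2 * t ^ 2) / (l0 ^ 2 - mu ^ 2) with hCdef
  have hC1 : 1 ≤ C := by
    rw [hCdef, le_div_iff₀ hG]
    have hnn : (0:ℝ) ≤ (l0 + mu) ^ 2 * t ^ 2 := by positivity
    linarith only [hnn]
  have hCpos : 0 < C := lt_of_lt_of_le one_pos hC1
  have hden : (0:ℝ) < 4 * mu + 4 * l0 * t ^ 2 + 1 := by positivity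
  set ε : ℝ := min ((l0 ^ 2 - mu ^ 2) / (4 * mu + 4 * l0 * t ^ 2 + 1)) (l0 * t ^ 2 / C)
    with hεdef
  have hεpos : 0 < ε := lt_min (div_pos hG hden) (div_pos (by positivity) hCpos)
  have hε1 : ε * (4 * mu + 4 * l0 * t ^ 2 + 1) ≤ l0 ^ 2 - mu ^ 2 :=
    (le_div_iff₀ hden).mp (min_le_left _ _)
  have hε2 : ε * C ≤ l0 * t ^ 2 := (le_div_iff₀ hCpos).mp (min_le_right _ _)
  have hεT : ε ≤ l0 * t ^ 2 := by
    have h1 := mul_le_mul_of_nonneg_left hC1 hεpos.le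
    linarith only [hε2, h1]
  have hRnn : 0 ≤ l0 ^ 2 - ε * l0 * t ^ 2 := by
    have h1 := mul_le_mul_of_nonneg_right hεT (by positivity : (0:ℝ) ≤ l0 * t ^ 2)
    have h2 := mul_le_mul_of_nonneg_left hT1 (by positivity : (0:ℝ) ≤ l0 ^ 2 * t ^ 2)
    have h3 := mul_le_mul_of_nonneg_left hT1 (sq_nonneg l0)
    linarith only [h1, h2, h3]
  have hRlt : Real.sqrt (l0 ^ 2 - ε * l0 * t ^ 2) < l0 := by
    have hpos : 0 < ε * l0 * t ^ 2 := by positivity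
    have hlt : l0 ^ 2 - ε * l0 * t ^ 2 < l0 ^ 2 := by linarith only [hpos]
    calc Real.sqrt (l0 ^ 2 - ε * l0 * t ^ 2) < Real.sqrt (l0 ^ 2) :=
          Real.sqrt_lt_sqrt hRnn hlt
      _ = l0 := Real.sqrt_sq hl0pos.le
  refine ⟨ε, lt_of_le_of_lt (rspecNorm_le (by omega) _ _ ?_) hRlt⟩
  intro x hx
  have hxs : ∑ i, x i ^ 2 = 1 := rvnorm_eq_one hx
  rw [pert_mulVec]
  unfold rvnorm
  apply Real.sqrt_le_sqrt
  set a : Fin N → ℝ := fun i => v i ⬝ᵥ x with ha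
  set wc : Fin N → ℝ := fun i => v i ⬝ᵥ w with hwcdef
  have hcoeff : ∀ i, v i ⬝ᵥ A.mulVec x = lam i * a i := fun i => coeff_mulVec hsymm heig i x
  set E : Finset (Fin N) := Finset.univ.erase i0 with hE
  set SL : ℝ := ∑ i ∈ E, (lam i * a i) ^ 2 with hSL
  set q : ℝ := ∑ i ∈ E, wc i * (lam i * a i) with hqdef
  set uu : ℝ := ∑ i ∈ E, wc i * a i with huudef
  set A2 : ℝ := ∑ i ∈ E, (a i) ^ 2 with hA2def
  set W2 : ℝ := ∑ i ∈ E, (wc i) ^ 2 with hW2def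
  have hwc0 : wc i0 = t := by rw [hwcdef, htdef]; exact dotProduct_comm _ _
  have hwc0' : v i0 ⬝ᵥ w = t := by rw [htdef]; exact dotProduct_comm _ _
  have hpp : A.mulVec x ⬝ᵥ A.mulVec x = (lam i0 * a i0) ^ 2 + SL := by
    rw [← parseval horth (A.mulVec x) (A.mulVec x)]
    rw [Finset.sum_congr rfl fun i _ => by rw [hcoeff i, ← sq]]
    rw [← Finset.add_sum_erase _ _ (Finset.mem_univ i0)]
  have hwp : w ⬝ᵥ A.mulVec x = t * (lam i0 * a i0) + q := by
    rw [← parseval horth w (A.mulVec x)]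
    rw [Finset.sum_congr rfl fun i _ => by rw [hcoeff i]]
    rw [← Finset.add_sum_erase _ _ (Finset.mem_univ i0), hwc0']
  have hwx : w ⬝ᵥ x = t * a i0 + uu := by
    rw [← parseval horth w x]
    rw [← Finset.add_sum_erase _ _ (Finset.mem_univ i0), hwc0']
  have hww : w ⬝ᵥ w = 1 := by rw [← sum_sq_eq_dot, hw]
  have ha1 : (a i0) ^ 2 + A2 = 1 := by
    have hp := parseval horth x x
    rw [← sum_sq_eq_dot, hxs] at hp
    have hp' : ∑ i, a i ^ 2 = 1 := by rw [ha]; simpa [pow_two] using hp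
    rw [← Finset.add_sum_erase _ _ (Finset.mem_univ i0)] at hp'
    exact hp'
  have hw1 : t ^ 2 + W2 = 1 := by
    have hp := parseval horth w w
    rw [hww] at hp
    have hp' : ∑ i, wc i ^ 2 = 1 := by rw [hwcdef]; simpa [pow_two] using hp
    rw [← Finset.add_sum_erase _ _ (Finset.mem_univ i0), hwc0] at hp'
    exact hp'
  have hA2nn : 0 ≤ A2 := Finset.sum_nonneg fun i _ => sq_nonneg _
  have hW2nn : 0 ≤ W2 := Finset.sum_nonneg fun i _ => sq_nonneg _
  have hSLnn : 0 ≤ SL := Finset.sum_nonneg fun i _ => sq_nonneg _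
  have hW2le1 : W2 ≤ 1 := by linarith only [hw1, sq_nonneg t]
  have hmuE : ∀ i ∈ E, (lam i) ^ 2 ≤ mu ^ 2 := by
    intro i hi
    have hne : i ≠ i0 := Finset.ne_of_mem_erase hi
    have h1le : i1 ≤ i := by
      rw [Fin.le_def]
      have : (i : ℕ) ≠ 0 := fun h => hne (by rw [hi0]; exact Fin.ext h)
      simp [hi1]; omega
    have habs := hord i1 i h1le
    calc (lam i) ^ 2 = |lam i| ^ 2 := (sq_abs _).symm
      _ ≤ mu ^ 2 := pow_le_pow_left₀ (abs_nonneg _) habs 2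
  have hSLle : SL ≤ mu ^ 2 * A2 := by
    rw [hSL, hA2def, Finset.mul_sum]
    refine Finset.sum_le_sum fun i hi => ?_
    rw [mul_pow]
    exact mul_le_mul_of_nonneg_right (hmuE i hi) (sq_nonneg _)
  have hq2 : q ^ 2 ≤ mu ^ 2 * A2 := by
    have hcs := Finset.sum_mul_sq_le_sq_mul_sq E wc (fun i => lam i * a i)
    have p1 := mul_le_mul_of_nonneg_left hSLle hW2nn
    have p2 := mul_le_mul_of_nonneg_right hW2le1 (mul_nonneg (sq_nonneg mu) hA2nn)
    rw [← hqdef, ← hW2def] at hcs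
    rw [show (∑ i ∈ E, (fun i => lam i * a i) i ^ 2) = SL from rfl] at hcs
    linarith only [hcs, p1, p2]
  have huu2 : uu ^ 2 ≤ A2 := by
    have hcs := Finset.sum_mul_sq_le_sq_mul_sq E wc a
    rw [← huudef, ← hW2def, ← hA2def] at hcs
    have p2 := mul_le_mul_of_nonneg_right hW2le1 hA2nn
    linarith only [hcs, p2]
  have hs2 : (t * a i0 + uu) ^ 2 ≤ 1 := by
    rw [← hwx]
    have hcs := Finset.sum_mul_sq_le_sq_mul_sq Finset.univ w x
    rw [hw, hxs] at hcs
    simpa [dotProduct] using hcs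
  set bb : ℝ := Real.sqrt A2 with hbbdef
  have hbbnn : 0 ≤ bb := Real.sqrt_nonneg _
  have hbb2 : bb ^ 2 = A2 := Real.sq_sqrt hA2nn
  set m : ℝ := |a i0| with hmdef
  set τ : ℝ := |t| with hτdef
  have hm2 : m ^ 2 = (a i0) ^ 2 := sq_abs _
  have hτ2 : τ ^ 2 = t ^ 2 := sq_abs _
  have hm0 : 0 ≤ m := abs_nonneg _
  have hτ0 : 0 ≤ τ := abs_nonneg _
  have hm1 : m ≤ 1 := abs_le_of_sq_le' zero_le_one
    (by rw [one_pow]; linarith only [ha1, hA2nn])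
  have huub : |uu| ≤ bb := abs_le_of_sq_le' hbbnn (by rw [hbb2]; exact huu2)
  have hqb : |q| ≤ mu * bb := abs_le_of_sq_le' (mul_nonneg hmu hbbnn)
    (by rw [mul_pow, hbb2]; exact hq2)
  have ha0sub : (a i0) ^ 2 = 1 - bb ^ 2 := by linarith only [ha1, hbb2]
  rw [dot_expand (A.mulVec x) w (ε * (w ⬝ᵥ x)), hpp, hwp, hwx, hww]
  have hal : |l0 * a i0 * t| ≤ l0 * m * τ := by
    rw [abs_mul, abs_mul, abs_of_pos hl0pos]
  have hat : |a i0 * t| ≤ m * τ := by rw [abs_mul]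
  have c1 : -(l0 * a i0 * t * uu) ≤ l0 * m * τ * bb := prod_bound hal huub
  have c2 : -(q * (a i0 * t)) ≤ (mu * bb) * (m * τ) := prod_bound hqb hat
  have c3 : -(q * uu) ≤ (mu * bb) * bb := prod_bound hqb huub
  have h2ε : (0:ℝ) ≤ 2 * ε := by positivity
  have c1' := mul_le_mul_of_nonneg_left c1 h2ε
  have c2' := mul_le_mul_of_nonneg_left c2 h2ε
  have c3' := mul_le_mul_of_nonneg_left c3 h2ε
  have c5 : (ε * (t * a i0 + uu)) ^ 2 ≤ ε ^ 2 := by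
    rw [mul_pow]
    have h1 := mul_le_mul_of_nonneg_left hs2 (sq_nonneg ε)
    linarith only [h1]
  have hSLb : SL ≤ mu ^ 2 * bb ^ 2 := by rw [hbb2]; exact hSLle
  have step1 : (lam i0 * a i0) ^ 2 + SL
        - 2 * (ε * (t * a i0 + uu)) * (t * (lam i0 * a i0) + q)
        + (ε * (t * a i0 + uu)) ^ 2 * 1
      ≤ l0 ^ 2 * (a i0) ^ 2 + mu ^ 2 * bb ^ 2 - 2 * ε * l0 * t ^ 2 * (a i0) ^ 2
        + 2 * ε * (l0 + mu) * τ * (m * bb) + 2 * ε * mu * bb ^ 2 + ε ^ 2 := by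
    have hl0e : lam i0 = l0 := rfl
    rw [hl0e]
    linarith only [c1', c2', c3', c5, hSLb]
  rw [ha0sub] at step1
  refine le_trans step1 ?_
  exact scalar_key l0 mu ε τ bb m (t ^ 2) C hl0pos hmu hgap hεpos hτ0 hτ2 hTpos hbbnn
    hm0 hm1 hCdef hε1 hε2

lemma rvnorm_smul {n : ℕ} (c : ℝ) (y : Fin n → ℝ) : rvnorm (c • y) = |c| * rvnorm y := by
  unfold rvnorm
  rw [show ∑ i, ((c • y) i) ^ 2 = c ^ 2 * ∑ i, y i ^ 2 by
    rw [Finset.mul_sum]; exact Finset.sum_congr rfl fun i _ => by simp [mul_pow]]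
  rw [Real.sqrt_mul (sq_nonneg c), Real.sqrt_sq_eq_abs]

lemma key_lower {N : ℕ} (hN : 2 ≤ N) (A : Matrix (Fin N) (Fin N) ℝ)
    (lam : Fin N → ℝ) (v : Fin N → Fin N → ℝ)
    (heig : ∀ i, A.mulVec (v i) = lam i • v i)
    (horth : ∀ i j, v i ⬝ᵥ v j = if i = j then (1 : ℝ) else 0)
    (hord : ∀ i j : Fin N, i ≤ j → |lam j| ≤ |lam i|)
    (c : ℝ) (u : Fin N → ℝ) :
    |lam ⟨1, by omega⟩| ≤ rspecNorm (A - c • vecMulVec u u) := by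
  set i0 : Fin N := ⟨0, by omega⟩ with hi0
  set i1 : Fin N := ⟨1, by omega⟩ with hi1
  have hne : i0 ≠ i1 := by rw [hi0, hi1]; simp [Fin.ext_iff]
  have h00 : v i0 ⬝ᵥ v i0 = 1 := by rw [horth]; simp
  have h11 : v i1 ⬝ᵥ v i1 = 1 := by rw [horth]; simp
  have h01 : v i0 ⬝ᵥ v i1 = 0 := by rw [horth]; simp [hne]
  have h10 : v i1 ⬝ᵥ v i0 = 0 := by rw [horth]; simp [hne.symm]
  have hlle : |lam i1| ≤ |lam i0| := hord i0 i1 (by rw [hi0, hi1]; simp [Fin.le_def])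
  set α : ℝ := u ⬝ᵥ v i0 with hα
  set β : ℝ := u ⬝ᵥ v i1 with hβ
  by_cases hr : α ^ 2 + β ^ 2 = 0
  · have hβ0 : β = 0 := by nlinarith [sq_nonneg α, sq_nonneg β]
    have hx : rvnorm (v i1) = 1 := by
      unfold rvnorm; rw [sum_sq_eq_dot, h11, Real.sqrt_one]
    have hBx : (A - c • vecMulVec u u).mulVec (v i1) = lam i1 • v i1 := by
      rw [pert_mulVec, ← hβ, hβ0, heig i1]; simp
    have := le_rspecNorm (A - c • vecMulVec u u) (v i1) hx
    rwa [hBx, rvnorm_smul, hx, mul_one] at this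
  · have hr2 : 0 < α ^ 2 + β ^ 2 := lt_of_le_of_ne (by positivity) (Ne.symm hr)
    set ρ : ℝ := Real.sqrt (α ^ 2 + β ^ 2) with hρdef
    have hρ : 0 < ρ := Real.sqrt_pos.mpr hr2
    have hρ2 : ρ ^ 2 = α ^ 2 + β ^ 2 := Real.sq_sqrt hr2.le
    set x : Fin N → ℝ := ρ⁻¹ • (β • v i0 - α • v i1) with hxdef
    have hdot : x ⬝ᵥ x = 1 := by
      rw [hxdef]
      simp only [smul_dotProduct, dotProduct_smul, sub_dotProduct, dotProduct_sub,
        h00, h01, h10, h11, smul_eq_mul]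
      field_simp
      nlinarith [hρ2]
    have hx : rvnorm x = 1 := by rw [rvnorm_eq_sqrt_dot, hdot, Real.sqrt_one]
    have hux : u ⬝ᵥ x = 0 := by
      rw [hxdef]
      simp only [dotProduct_smul, dotProduct_sub, ← hα, ← hβ, smul_eq_mul]
      ring
    have hBx : (A - c • vecMulVec u u).mulVec x = A.mulVec x := by
      rw [pert_mulVec, hux]; simp
    have hAx : A.mulVec x = ρ⁻¹ • ((β * lam i0) • v i0 - (α * lam i1) • v i1) := by
      rw [hxdef, Matrix.mulVec_smul, Matrix.mulVec_sub, Matrix.mulVec_smul,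
        Matrix.mulVec_smul, heig i0, heig i1]
      congr 1
      rw [smul_smul, smul_smul]
    have hAA : A.mulVec x ⬝ᵥ A.mulVec x
        = (ρ ^ 2)⁻¹ * (β ^ 2 * lam i0 ^ 2 + α ^ 2 * lam i1 ^ 2) := by
      rw [hAx]
      simp only [smul_dotProduct, dotProduct_smul, sub_dotProduct, dotProduct_sub,
        h00, h01, h10, h11, smul_eq_mul]
      ring
    have hdotge : lam i1 ^ 2 ≤ A.mulVec x ⬝ᵥ A.mulVec x := by
      rw [hAA, hρ2]
      rw [show ((α ^ 2 + β ^ 2)⁻¹ * (β ^ 2 * lam i0 ^ 2 + α ^ 2 * lam i1 ^ 2))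
          = (β ^ 2 * lam i0 ^ 2 + α ^ 2 * lam i1 ^ 2) / (α ^ 2 + β ^ 2) by ring]
      rw [le_div_iff₀ hr2]
      have hsq : lam i1 ^ 2 ≤ lam i0 ^ 2 := by
        calc lam i1 ^ 2 = |lam i1| ^ 2 := (sq_abs _).symm
          _ ≤ |lam i0| ^ 2 := pow_le_pow_left₀ (abs_nonneg _) hlle 2
          _ = lam i0 ^ 2 := sq_abs _
      nlinarith [mul_le_mul_of_nonneg_left hsq (sq_nonneg β)]
    have hge : |lam i1| ≤ rvnorm (A.mulVec x) := by
      rw [rvnorm_eq_sqrt_dot, ← Real.sqrt_sq_eq_abs]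
      exact Real.sqrt_le_sqrt hdotge
    have := le_rspecNorm (A - c • vecMulVec u u) x hx
    rw [hBx] at this
    exact le_trans hge this

/-- The optimal rank-1 Hankel approximation error (in the spectral norm) of a
real symmetric matrix with simple largest singular value satisfies
`|λ₁| ≤ λ̃ < λ₀`. -/
theorem stmt11 (N : ℕ) (hN : 2 ≤ N) (A : Matrix (Fin N) (Fin N) ℝ)
    (hsymm : A.IsSymm) (hrank : 1 < A.rank)
    (lam : Fin N → ℝ) (v : Fin N → Fin N → ℝ)
    (heig : ∀ i, A.mulVec (v i) = lam i • v i)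
    (horth : ∀ i j, v i ⬝ᵥ v j = if i = j then (1 : ℝ) else 0)
    (hord : ∀ i j : Fin N, i ≤ j → |lam j| ≤ |lam i|)
    (hlam0 : lam ⟨0, by omega⟩ = rspecNorm A)
    (hgap : |lam ⟨1, by omega⟩| < lam ⟨0, by omega⟩) :
    |lam ⟨1, by omega⟩| ≤
        sInf {r : ℝ |
          (∃ c z : ℝ, r = rspecNorm (A - c • vecMulVec (rzvec N z) (rzvec N z))) ∨
          (∃ c : ℝ, r = rspecNorm (A - c • vecMulVec (revec N) (revec N)))} ∧
      sInf {r : ℝ |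
          (∃ c z : ℝ, r = rspecNorm (A - c • vecMulVec (rzvec N z) (rzvec N z))) ∨
          (∃ c : ℝ, r = rspecNorm (A - c • vecMulVec (revec N) (revec N)))} <
        lam ⟨0, by omega⟩ := by
  set S : Set ℝ := {r : ℝ |
      (∃ c z : ℝ, r = rspecNorm (A - c • vecMulVec (rzvec N z) (rzvec N z))) ∨
      (∃ c : ℝ, r = rspecNorm (A - c • vecMulVec (revec N) (revec N)))} with hSdef
  have hmem0 : rspecNorm (A - (0:ℝ) • vecMulVec (revec N) (revec N)) ∈ S :=
    Or.inr ⟨0, rfl⟩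
  have hSne : S.Nonempty := ⟨_, hmem0⟩
  have hlb : ∀ r ∈ S, |lam ⟨1, by omega⟩| ≤ r := by
    rintro r (⟨c, z, rfl⟩ | ⟨c, rfl⟩)
    · exact key_lower hN A lam v heig horth hord c _
    · exact key_lower hN A lam v heig horth hord c _
  have hbdd : BddBelow S := ⟨_, hlb⟩
  refine ⟨le_csInf hSne hlb, ?_⟩
  have hNpos : 0 < N := by omega
  obtain ⟨k0, hk0⟩ : ∃ k, v ⟨0, by omega⟩ k ≠ 0 := by
    by_contra h
    push_neg at h
    have h00 : v (⟨0, by omega⟩ : Fin N) ⬝ᵥ v ⟨0, by omega⟩ = 1 := by rw [horth]; simp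
    rw [dotProduct] at h00
    simp [h] at h00
  obtain ⟨z, hz⟩ := exists_eval_ne (v ⟨0, by omega⟩) k0 hk0
  have hw : ∑ i, rzvec N z i ^ 2 = 1 := rzvec_sq_sum hNpos z
  have ht : rzvec N z ⬝ᵥ v ⟨0, by omega⟩ ≠ 0 := by
    rw [rzvec_dot]
    exact mul_ne_zero
      (inv_ne_zero (ne_of_gt (Real.sqrt_pos.mpr (zsum_pos hNpos z)))) hz
  obtain ⟨ε, hε⟩ := key_upper hN A hsymm lam v heig horth hord hgap (rzvec N z) hw ht
  have hmem : rspecNorm (A - ε • vecMulVec (rzvec N z) (rzvec N z)) ∈ S :=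
    Or.inl ⟨ε, z, rfl⟩
  exact lt_of_le_of_lt (csInf_le hbdd hmem) hε
end
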